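/- (Weyl limit-circle implies all solutions L²) If ν ≠ 0 and the radii r_b = (2|ν| ∫_0^b |φ(x)|² d_q x)^{-1} tend to a positive limit as b → ∞ along ℝ_q^+, then φ ∈ L²(ℝ_q^+); consequently, since ψ = θ + mφ ∈ L²(ℝ_q^+), every solution of Δ_q f + (λ-V)f = 0 (each being a linear combination of θ and φ) belongs to L²(ℝ_q^+). -/

import Mathlib

open Filter Topology

/-- The `q`-derivative. -/
noncomputable def qDeriv (q : ℝ) (f : ℝ → ℂ) (x : ℝ) : ℂ :=
  (f x - f (q * x)) / (((1 - q) * x : ℝ) : ℂ)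

/-- The `q`-Laplace operator. -/
noncomputable def qLap (q : ℝ) (f : ℝ → ℂ) (x : ℝ) : ℂ :=
  ((1 / x ^ 2 : ℝ) : ℂ) *
    (f (x / q) - (((1 + q) / q : ℝ) : ℂ) * f x + ((1 / q : ℝ) : ℂ) * f (q * x))

/-- Real-valued Jackson integral on `[0,b]`. -/
noncomputable def jackson0bR (q : ℝ) (g : ℝ → ℝ) (b : ℝ) : ℝ :=
  (1 - q) * ∑' n : ℕ, q ^ n * b * g (b * q ^ n)

/-- Weyl limit-circle case: if the radii `r_b = (2|ν| ∫_0^b |φ|² d_q x)⁻¹` tend to a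
positive limit as `b → ∞` along `ℝ_q^+` and `ψ = θ + mφ ∈ L²(ℝ_q^+)`, then
`φ ∈ L²(ℝ_q^+)` and every solution `aθ + bφ` of `Δ_q f + (λ-V)f = 0` is in
`L²(ℝ_q^+)`. -/
theorem stmt9 (q : ℝ) (hq0 : 0 < q) (hq1 : q < 1) (V : ℝ → ℝ) (mu nu : ℝ) (hnu : nu ≠ 0)
    (theta phi : ℝ → ℂ) (m : ℂ)
    (htheta : ∀ n : ℤ, qLap q theta (q ^ n)
      + (((mu : ℂ) + (nu : ℂ) * Complex.I) - (V (q ^ n) : ℂ)) * theta (q ^ n) = 0)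
    (hphi : ∀ n : ℤ, qLap q phi (q ^ n)
      + (((mu : ℂ) + (nu : ℂ) * Complex.I) - (V (q ^ n) : ℂ)) * phi (q ^ n) = 0)
    (hSb : ∀ N : ℕ, Summable (fun n : ℕ => q ^ n * (q : ℝ) ^ (-(N : ℤ)) *
      ‖phi ((q : ℝ) ^ (-(N : ℤ)) * q ^ n)‖ ^ 2))
    (r : ℝ) (hr : 0 < r)
    (hrb : Tendsto (fun N : ℕ =>
      (2 * |nu| * jackson0bR q (fun x => ‖phi x‖ ^ 2) ((q : ℝ) ^ (-(N : ℤ))))⁻¹)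
      atTop (𝓝 r))
    (hpsi : Summable (fun n : ℤ =>
      (q : ℝ) ^ n * ‖theta ((q : ℝ) ^ n) + m * phi ((q : ℝ) ^ n)‖ ^ 2)) :
    Summable (fun n : ℤ => (q : ℝ) ^ n * ‖phi ((q : ℝ) ^ n)‖ ^ 2) ∧
    ∀ a b : ℂ, Summable (fun n : ℤ =>
      (q : ℝ) ^ n * ‖a * theta ((q : ℝ) ^ n) + b * phi ((q : ℝ) ^ n)‖ ^ 2) := by

  have hqne : (q : ℝ) ≠ 0 := ne_of_gt hq0
  -- f n = q^n |φ(q^n)|²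
  set f : ℤ → ℝ := fun n => (q : ℝ) ^ n * ‖phi ((q : ℝ) ^ n)‖ ^ 2 with hfdef
  have hfnn : ∀ n, 0 ≤ f n := fun n => mul_nonneg (zpow_nonneg hq0.le _) (sq_nonneg _)
  have hg : ∀ N : ℕ, ∀ n : ℕ, q ^ n * (q : ℝ) ^ (-(N : ℤ)) *
      ‖phi ((q : ℝ) ^ (-(N : ℤ)) * q ^ n)‖ ^ 2 = f ((n : ℤ) - N) := by
    intro N n
    have h1 : (q : ℝ) ^ n * (q : ℝ) ^ (-(N : ℤ)) = (q : ℝ) ^ ((n : ℤ) - N) := by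
      rw [← zpow_natCast q n, ← zpow_add₀ hqne, sub_eq_add_neg]
    have h2 : (q : ℝ) ^ (-(N : ℤ)) * q ^ n = (q : ℝ) ^ ((n : ℤ) - N) := by
      rw [← zpow_natCast q n, ← zpow_add₀ hqne, add_comm, sub_eq_add_neg]
    rw [hfdef]; dsimp only; rw [h1, h2]
  have hSb' : ∀ N : ℕ, Summable (fun n : ℕ => f ((n : ℤ) - N)) := by
    intro N
    have := hSb N
    simpa only [hg N] using this
  set S : ℕ → ℝ := fun N => ∑' n : ℕ, f ((n : ℤ) - N) with hSdef
  have hSnn : ∀ N, 0 ≤ S N := fun N => tsum_nonneg (fun n => hfnn _)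
  have hSmono : Monotone S := by
    apply monotone_nat_of_le_succ
    intro N
    refine (hSb' N).tsum_le_tsum_of_inj (fun n => n + 1) (add_left_injective 1)
      (fun c _ => hfnn _) (fun n => ?_) (hSb' (N + 1))
    push_cast
    rw [show ((n : ℤ) + 1 - ((N : ℤ) + 1)) = (n : ℤ) - N by ring]
  -- jackson0bR at q^{-N} equals (1-q) * S N
  have hjack : ∀ N : ℕ, jackson0bR q (fun x => ‖phi x‖ ^ 2) ((q : ℝ) ^ (-(N : ℤ)))
      = (1 - q) * S N := by
    intro N
    unfold jackson0bR
    congr 1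
    exact tsum_congr (fun n => hg N n)
  set k : ℝ := 2 * |nu| * (1 - q) with hkdef
  have hk : 0 < k := by
    have : 0 < |nu| := abs_pos.mpr hnu
    have h1q : 0 < 1 - q := by linarith
    positivity
  have hrb' : Tendsto (fun N : ℕ => (k * S N)⁻¹) atTop (𝓝 r) := by
    refine hrb.congr (fun N => ?_)
    rw [hjack N, hkdef]; ring_nf
  -- bound: S N ≤ (k * r)⁻¹ for all N
  have hSbound : ∀ N : ℕ, S N ≤ (k * r)⁻¹ := by
    intro N
    rcases eq_or_lt_of_le (hSnn N) with h0 | hpos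
    · rw [← h0]; positivity
    · have hev : ∀ M, N ≤ M → (k * S M)⁻¹ ≤ (k * S N)⁻¹ := by
        intro M hM
        have hSM : 0 < S M := lt_of_lt_of_le hpos (hSmono hM)
        exact inv_anti₀ (by positivity) (by
          exact mul_le_mul_of_nonneg_left (hSmono hM) hk.le)
      have : r ≤ (k * S N)⁻¹ :=
        le_of_tendsto hrb' (Filter.eventually_atTop.mpr ⟨N, hev⟩)
      have hkS : 0 < k * S N := by positivity
      have h1 : r * (k * S N) ≤ 1 := by
        calc r * (k * S N) ≤ (k * S N)⁻¹ * (k * S N) :=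
              mul_le_mul_of_nonneg_right this hkS.le
          _ = 1 := inv_mul_cancel₀ (ne_of_gt hkS)
      have hkr : 0 < k * r := mul_pos hk hr
      have h2 : S N * (k * r) ≤ 1 := by nlinarith
      calc S N = S N * (k * r) * (k * r)⁻¹ := by field_simp
        _ ≤ 1 * (k * r)⁻¹ := mul_le_mul_of_nonneg_right h2 (inv_nonneg.mpr hkr.le)
        _ = (k * r)⁻¹ := one_mul _
  -- φ is L²
  have hphiL2 : Summable f := by
    apply summable_of_sum_le hfnn (c := (k * r)⁻¹)
    intro u
    set N : ℕ := u.sup (fun m => (-m).toNat) with hN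
    have hmem : ∀ m ∈ u, -(N : ℤ) ≤ m := by
      intro m hm
      have h1 : (-m).toNat ≤ N := Finset.le_sup (f := fun m => (-m).toNat) hm
      have h2 : -m ≤ ((-m).toNat : ℤ) := Int.self_le_toNat _
      omega
    have hsum : ∑ m ∈ u, f m = ∑ n ∈ u.image (fun m : ℤ => (m + (N : ℤ)).toNat),
        f ((n : ℤ) - N) := by
      rw [Finset.sum_image (by intro a ha b hb h; have := hmem a ha; have := hmem b hb; simp only at h; omega)]
      refine Finset.sum_congr rfl (fun m hm => ?_)
      have : ((m + (N : ℤ)).toNat : ℤ) = m + N := Int.toNat_of_nonneg (by have := hmem m hm; omega)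
      rw [this]; ring_nf
    rw [hsum]
    calc ∑ n ∈ u.image (fun m : ℤ => (m + (N : ℤ)).toNat), f ((n : ℤ) - N)
        ≤ S N := Summable.sum_le_tsum _ (fun n _ => hfnn _) (hSb' N)
      _ ≤ (k * r)⁻¹ := hSbound N
  refine ⟨hphiL2, fun a b => ?_⟩
  set c : ℂ := b - a * m with hc
  have key : ∀ n : ℤ, (q : ℝ) ^ n *
      ‖a * theta ((q : ℝ) ^ n) + b * phi ((q : ℝ) ^ n)‖ ^ 2 ≤
      2 * ‖a‖ ^ 2 * ((q : ℝ) ^ n *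
        ‖theta ((q : ℝ) ^ n) + m * phi ((q : ℝ) ^ n)‖ ^ 2)
      + 2 * ‖c‖ ^ 2 * f n := by
    intro n
    have hq' : (0 : ℝ) ≤ (q : ℝ) ^ n := zpow_nonneg hq0.le _
    have hdecomp : a * theta ((q : ℝ) ^ n) + b * phi ((q : ℝ) ^ n)
        = a * (theta ((q : ℝ) ^ n) + m * phi ((q : ℝ) ^ n)) + c * phi ((q : ℝ) ^ n) := by
      rw [hc]; ring
    rw [hdecomp]
    have habs : ‖a * (theta ((q : ℝ) ^ n) + m * phi ((q : ℝ) ^ n))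
        + c * phi ((q : ℝ) ^ n)‖ ≤ ‖a‖ * ‖theta ((q : ℝ) ^ n)
        + m * phi ((q : ℝ) ^ n)‖ + ‖c‖ * ‖phi ((q : ℝ) ^ n)‖ := by
      calc _ ≤ ‖a * (theta ((q : ℝ) ^ n) + m * phi ((q : ℝ) ^ n))‖
            + ‖c * phi ((q : ℝ) ^ n)‖ := norm_add_le _ _
        _ = _ := by rw [norm_mul, norm_mul]
    have h1 : ‖a * (theta ((q : ℝ) ^ n) + m * phi ((q : ℝ) ^ n))
        + c * phi ((q : ℝ) ^ n)‖ ^ 2 ≤ 2 * ‖a‖ ^ 2 *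
        ‖theta ((q : ℝ) ^ n) + m * phi ((q : ℝ) ^ n)‖ ^ 2
        + 2 * ‖c‖ ^ 2 * ‖phi ((q : ℝ) ^ n)‖ ^ 2 := by
      nlinarith [norm_nonneg (a * (theta ((q : ℝ) ^ n)
        + m * phi ((q : ℝ) ^ n)) + c * phi ((q : ℝ) ^ n)),
        sq_nonneg (‖a‖ * ‖theta ((q : ℝ) ^ n)
        + m * phi ((q : ℝ) ^ n)‖ - ‖c‖ * ‖phi ((q : ℝ) ^ n)‖)]
    calc (q : ℝ) ^ n * ‖a * (theta ((q : ℝ) ^ n) + m * phi ((q : ℝ) ^ n))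
          + c * phi ((q : ℝ) ^ n)‖ ^ 2
        ≤ (q : ℝ) ^ n * (2 * ‖a‖ ^ 2 *
          ‖theta ((q : ℝ) ^ n) + m * phi ((q : ℝ) ^ n)‖ ^ 2
          + 2 * ‖c‖ ^ 2 * ‖phi ((q : ℝ) ^ n)‖ ^ 2) :=
          mul_le_mul_of_nonneg_left h1 hq'
      _ = _ := by rw [hfdef]; ring
  have hsumRHS : Summable (fun n : ℤ =>
      2 * ‖a‖ ^ 2 * ((q : ℝ) ^ n *
        ‖theta ((q : ℝ) ^ n) + m * phi ((q : ℝ) ^ n)‖ ^ 2)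
      + 2 * ‖c‖ ^ 2 * f n) :=
    (hpsi.mul_left _).add (hphiL2.mul_left _)
  exact Summable.of_nonneg_of_le
    (fun n => mul_nonneg (zpow_nonneg hq0.le _) (sq_nonneg _)) key hsumRHS
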